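/- Let a, b > 0 and define ψ(u) = a·(1 − exp(−(1/b)·(u₊)²)), where u₊ = max(u,0). Then for any A ≥ a/b, the function A·u² − ψ(u) is convex on ℝ. -/

import Mathlib

open Real Set Filter

-- derivative of u ↦ (max u 0)^2
lemma hderiv_m2 (x : ℝ) : HasDerivAt (fun u : ℝ => (max u 0) ^ 2) (2 * max x 0) x := by
  rcases lt_trichotomy x 0 with hx | hx | hx
  · have h : HasDerivAt (fun _ : ℝ => (0:ℝ)) (2 * max x 0) x := by
      simpa [max_eq_right hx.le] using (hasDerivAt_const x (0:ℝ))
    refine h.congr_of_eventuallyEq ?_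
    filter_upwards [eventually_lt_nhds hx] with y hy
    simp [max_eq_right hy.le]
  · subst hx
    rw [hasDerivAt_iff_tendsto_slope]
    simp only [max_self, ne_eq, zero_pow, mul_zero]
    apply squeeze_zero_norm' (a := fun y : ℝ => |y|)
    · filter_upwards [self_mem_nhdsWithin] with y (hy : y ≠ 0)
      rcases le_or_gt y 0 with h | h
      · simp only [slope_def_field, max_eq_right h, ne_eq, OfNat.ofNat_ne_zero,
          not_false_eq_true, zero_pow, max_self, sub_self, sub_zero, zero_div]
        simp
      · have hs : slope (fun y : ℝ => (max y 0) ^ 2) 0 y = y := by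
          rw [slope_def_field, max_eq_left h.le]
          simp only [max_self, ne_eq, OfNat.ofNat_ne_zero, not_false_eq_true, zero_pow,
            sub_zero]
          rw [sq, mul_div_assoc, div_self hy, mul_one]
        rw [hs]
        simp [Real.norm_eq_abs]
    · simpa using (continuous_abs.tendsto' 0 0 (by simp)).mono_left nhdsWithin_le_nhds
  · have h : HasDerivAt (fun u : ℝ => u ^ 2) (2 * max x 0) x := by
      simpa [max_eq_left hx.le] using hasDerivAt_pow 2 x
    refine h.congr_of_eventuallyEq ?_
    filter_upwards [eventually_gt_nhds hx] with y hy
    simp [max_eq_left hy.le]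

theorem stmt_11 (a b A : ℝ) (ha : 0 < a) (hb : 0 < b) (hA : a / b ≤ A) :
    ConvexOn ℝ Set.univ
      (fun u : ℝ => A * u ^ 2 - a * (1 - Real.exp (-(1 / b) * (max u 0) ^ 2))) := by
  have hb' : b ≠ 0 := hb.ne'
  set φ : ℝ → ℝ := fun x => 2 * A * x - 2 * a / b * (max x 0 * Real.exp (-(1 / b) * (max x 0) ^ 2)) with hφ
  have hder : ∀ x : ℝ, HasDerivAt
      (fun u : ℝ => A * u ^ 2 - a * (1 - Real.exp (-(1 / b) * (max u 0) ^ 2))) (φ x) x := by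
    intro x
    have h1 : HasDerivAt (fun u : ℝ => A * u ^ 2) (A * (2 * x)) x :=
      ((hasDerivAt_pow 2 x).const_mul A).congr_deriv (by push_cast; ring)
    have h2 : HasDerivAt (fun u : ℝ => -(1 / b) * (max u 0) ^ 2) (-(1 / b) * (2 * max x 0)) x :=
      (hderiv_m2 x).const_mul _
    have h3 := h2.exp
    have h4 : HasDerivAt (fun u : ℝ => a * (1 - Real.exp (-(1 / b) * (max u 0) ^ 2)))
        (a * (0 - Real.exp (-(1 / b) * (max x 0) ^ 2) * (-(1 / b) * (2 * max x 0)))) x :=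
      ((hasDerivAt_const x (1:ℝ)).sub h3).const_mul a
    refine (h1.sub h4).congr_deriv ?_
    rw [hφ]; field_simp; ring
  -- monotonicity of u - u * exp(-u²/b) on [0,∞)
  have kmono : MonotoneOn (fun u : ℝ => u - u * Real.exp (-(1 / b) * u ^ 2)) (Set.Ici 0) := by
    apply monotoneOn_of_deriv_nonneg (convex_Ici 0)
    · fun_prop
    · intro x hx
      exact ((differentiable_id.sub (differentiable_id.mul
        (((differentiable_id.pow 2).const_mul _).exp))) x).differentiableWithinAt
    · intro x hx
      rw [interior_Ici] at hx
      have hx0 : 0 < x := hx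
      have hd : HasDerivAt (fun u : ℝ => u - u * Real.exp (-(1 / b) * u ^ 2))
          (1 - (Real.exp (-(1 / b) * x ^ 2)
            + x * (Real.exp (-(1 / b) * x ^ 2) * (-(1 / b) * (2 * x))))) x := by
        have hexp : HasDerivAt (fun u : ℝ => Real.exp (-(1 / b) * u ^ 2))
            (Real.exp (-(1 / b) * x ^ 2) * (-(1 / b) * (2 * x))) x := by
          refine (((hasDerivAt_pow 2 x).const_mul (-(1/b))).exp).congr_deriv ?_
          push_cast; ring
        exact (hasDerivAt_id x).sub (((hasDerivAt_id x).mul hexp).congr_deriv (by simp))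
      rw [hd.deriv]
      have hE : Real.exp (-(1 / b) * x ^ 2) ≤ 1 := by
        rw [Real.exp_le_one_iff]
        have : 0 ≤ (1 / b) * x ^ 2 := by positivity
        linarith
      have hEpos : 0 < Real.exp (-(1 / b) * x ^ 2) := Real.exp_pos _
      have h3 : x * (Real.exp (-(1 / b) * x ^ 2) * (-(1 / b) * (2 * x)))
          = -(2 * (x ^ 2 * Real.exp (-(1 / b) * x ^ 2) / b)) := by
        field_simp
      have h2 : 0 ≤ x ^ 2 * Real.exp (-(1 / b) * x ^ 2) / b := by positivity
      rw [h3]; linarith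
  -- g and its Lipschitz-type bound
  set g : ℝ → ℝ := fun x => max x 0 * Real.exp (-(1 / b) * (max x 0) ^ 2) with hg
  have hgk : ∀ x y : ℝ, x ≤ y → g y - g x ≤ y - x := by
    intro x y hxy
    rcases le_or_gt y 0 with hy | hy
    · have hx : x ≤ 0 := hxy.trans hy
      simp only [hg, max_eq_right hx, max_eq_right hy, zero_mul]
      linarith
    · rcases le_or_gt x 0 with hx | hx
      · have h0 : (0:ℝ) - 0 * Real.exp (-(1/b) * (0:ℝ) ^ 2)
            ≤ y - y * Real.exp (-(1/b) * y ^ 2) := kmono (le_refl (0:ℝ)) hy.le hy.le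
        rw [zero_mul, sub_zero] at h0
        simp only [hg, max_eq_right hx, max_eq_left hy.le, zero_mul]
        linarith
      · have h1 : x - x * Real.exp (-(1/b) * x ^ 2)
            ≤ y - y * Real.exp (-(1/b) * y ^ 2) := kmono hx.le (hx.trans_le hxy).le hxy
        simp only [hg, max_eq_left hx.le, max_eq_left (hx.trans_le hxy).le]
        linarith
  have hφmono : Monotone φ := by
    intro x y hxy
    have h1 : g y - g x ≤ y - x := hgk x y hxy
    have hab : 0 ≤ 2 * a / b := by positivity
    have h2 : 2 * a / b * (g y - g x) ≤ 2 * a / b * (y - x) := mul_le_mul_of_nonneg_left h1 hab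
    have h3 : 2 * a / b * (y - x) ≤ 2 * A * (y - x) := by
      apply mul_le_mul_of_nonneg_right _ (by linarith)
      calc 2 * a / b = 2 * (a / b) := by ring
        _ ≤ 2 * A := by linarith
    simp only [hφ, hg] at *
    linarith
  have hdiff : Differentiable ℝ (fun u : ℝ => A * u ^ 2 - a * (1 - Real.exp (-(1 / b) * (max u 0) ^ 2))) :=
    fun x => (hder x).differentiableAt
  have hdeq : deriv (fun u : ℝ => A * u ^ 2 - a * (1 - Real.exp (-(1 / b) * (max u 0) ^ 2))) = φ :=
    funext fun x => (hder x).deriv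
  exact Monotone.convexOn_univ_of_deriv hdiff (hdeq ▸ hφmono)
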